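/- Let σ lie on the unit circle, λ ∈ ℝ, and let p be holomorphic on the open unit disc with Re p ≥ 0. Define G(z) = (z-σ)(σ̄z-1)(p(z) - (λ/2)(σ+z)/(σ-z)). Then for all z in the unit disc, |G(z)| ≤ 4(√2·|G(0)| + (√2+1)·|λ|/2) · |σ-z|²/(1-|z|²). -/

import Mathlib

open Complex
open scoped ComplexConjugate

/-- Carathéodory-class growth estimate, strict version. -/
lemma halfplane_bound_strict (p : ℂ → ℂ)
    (hp : DifferentiableOn ℂ p (Metric.ball (0 : ℂ) 1))
    (hre : ∀ z ∈ Metric.ball (0 : ℂ) 1, 0 < (p z).re) :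
    ∀ z ∈ Metric.ball (0 : ℂ) 1,
      ‖p z‖ ≤ ‖p 0‖ * (1 + ‖z‖) / (1 - ‖z‖) := by
  intro z hz
  set a := p 0 with ha
  have h0 : (0 : ℂ) ∈ Metric.ball (0 : ℂ) 1 := by simp
  have hare : 0 < a.re := hre 0 h0
  -- the Cayley-type transform
  set f : ℂ → ℂ := fun w => (p w - a) / (p w + conj a) with hf
  have hden : ∀ w ∈ Metric.ball (0 : ℂ) 1, p w + conj a ≠ 0 := by
    intro w hw h
    have : (p w + conj a).re = 0 := by rw [h]; simp
    rw [Complex.add_re, Complex.conj_re] at this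
    have := hre w hw
    linarith
  have hfd : DifferentiableOn ℂ f (Metric.ball (0 : ℂ) 1) := by
    apply DifferentiableOn.div (hp.sub (differentiableOn_const a))
      (hp.add (differentiableOn_const (conj a))) hden
  have hmaps : Set.MapsTo f (Metric.ball (0 : ℂ) 1) (Metric.ball (0 : ℂ) 1) := by
    intro w hw
    have hpw := hre w hw
    have hdenw := hden w hw
    have hlt : ‖p w - a‖ < ‖p w + conj a‖ := by
      have h1 : (‖p w - a‖) ^ 2 < (‖p w + conj a‖) ^ 2 := by
        simp only [Complex.sq_norm, Complex.normSq_apply, Complex.sub_re, Complex.sub_im,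
          Complex.add_re, Complex.add_im, Complex.conj_re, Complex.conj_im]
        nlinarith [hpw, hare]
      have h2 : 0 ≤ ‖p w + conj a‖ := norm_nonneg _
      nlinarith [norm_nonneg (p w - a)]
    rw [Metric.mem_ball, dist_zero_right]
    rw [hf]
    simp only [norm_div]
    rw [div_lt_one (lt_of_le_of_lt (norm_nonneg _) hlt)]
    exact hlt
  have hf0 : f 0 = 0 := by simp [hf, ha]
  have hzlt : ‖z‖ < 1 := by simpa [Metric.mem_ball, dist_zero_right] using hz
  have hschwarz : ‖f z‖ ≤ ‖z‖ :=
    Complex.norm_le_norm_of_mapsTo_ball hfd (hmaps.mono_right Metric.ball_subset_closedBall) hf0 hzlt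
  -- translate back
  have hdenz := hden z hz
  have key : ‖p z - a‖ ≤ ‖z‖ * ‖p z + conj a‖ := by
    have : ‖f z‖ * ‖p z + conj a‖ ≤
        ‖z‖ * ‖p z + conj a‖ :=
      mul_le_mul_of_nonneg_right hschwarz (norm_nonneg _)
    calc ‖p z - a‖ = ‖f z * (p z + conj a)‖ := by
          rw [hf]; field_simp
      _ = ‖f z‖ * ‖p z + conj a‖ := norm_mul _ _
      _ ≤ _ := this
  have h1 : ‖p z‖ - ‖a‖ ≤ ‖p z - a‖ := by
    have h := abs_norm_sub_norm_le (p z) a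
    have := le_abs_self (‖p z‖ - ‖a‖)
    linarith
  have h2 : ‖p z + conj a‖ ≤ ‖p z‖ + ‖a‖ := by
    calc ‖p z + conj a‖ ≤ ‖p z‖ + ‖conj a‖ :=
          norm_add_le _ _
      _ = ‖p z‖ + ‖a‖ := by rw [Complex.norm_conj]
  have hz1 : 0 < 1 - ‖z‖ := by linarith
  rw [le_div_iff₀ hz1]
  nlinarith [key, h1, h2, mul_le_mul_of_nonneg_left h2 (norm_nonneg z),
    norm_nonneg z]

/-- Carathéodory-class growth estimate. -/
lemma halfplane_bound (p : ℂ → ℂ)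
    (hp : DifferentiableOn ℂ p (Metric.ball (0 : ℂ) 1))
    (hre : ∀ z ∈ Metric.ball (0 : ℂ) 1, 0 ≤ (p z).re) :
    ∀ z ∈ Metric.ball (0 : ℂ) 1,
      ‖p z‖ ≤ ‖p 0‖ * (1 + ‖z‖) / (1 - ‖z‖) := by
  intro z hz
  have hzlt : ‖z‖ < 1 := by simpa [Metric.mem_ball, dist_zero_right] using hz
  have hz1 : (0 : ℝ) < 1 - ‖z‖ := by linarith
  set C : ℝ := (1 + ‖z‖) / (1 - ‖z‖) with hC
  have hCpos : 0 < C := div_pos (by positivity) hz1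
  refine le_of_forall_pos_le_add ?_
  intro δ hδ
  set ε : ℝ := δ / (C + 1) with hε
  have hεpos : 0 < ε := div_pos hδ (by linarith)
  have hstrict := halfplane_bound_strict (fun w => p w + (ε : ℂ))
    (hp.add (differentiableOn_const _))
    (fun w hw => by
      simp only [Complex.add_re, Complex.ofReal_re]
      linarith [hre w hw]) z hz
  have h1 : ‖p z‖ ≤ ‖p z + (ε : ℂ)‖ + ε := by
    have h := norm_add_le (p z + (ε : ℂ)) (-(ε : ℂ))
    simp only [add_neg_cancel_right, norm_neg, Complex.norm_real, Real.norm_eq_abs,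
      abs_of_pos hεpos] at h
    exact h
  have h2 : ‖p 0 + (ε : ℂ)‖ ≤ ‖p 0‖ + ε := by
    have h := norm_add_le (p 0) ((ε : ℂ))
    simpa [Complex.norm_real, abs_of_pos hεpos] using h
  have h3 : ‖p 0 + (ε : ℂ)‖ * (1 + ‖z‖) / (1 - ‖z‖)
      ≤ (‖p 0‖ + ε) * C := by
    rw [hC, mul_div_assoc]
    exact mul_le_mul_of_nonneg_right h2 (le_of_lt (div_pos (by positivity) hz1))
  have hεδ : ε * (C + 1) = δ := by
    rw [hε]; field_simp
  have hgoal : ‖p 0‖ * (1 + ‖z‖) / (1 - ‖z‖)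
      = ‖p 0‖ * C := by rw [hC, mul_div_assoc]
  rw [hgoal]
  nlinarith [hstrict, h1, h3, hεδ, hCpos, hεpos]

set_option maxHeartbeats 1000000 in
theorem stmt_3 (σ : ℂ) (hσ : ‖σ‖ = 1) (lam : ℝ) (p : ℂ → ℂ)
    (hp : DifferentiableOn ℂ p (Metric.ball (0 : ℂ) 1))
    (hre : ∀ z ∈ Metric.ball (0 : ℂ) 1, 0 ≤ (p z).re)
    (G : ℂ → ℂ)
    (hG : ∀ z ∈ Metric.ball (0 : ℂ) 1,
      G z = (z - σ) * (conj σ * z - 1) * (p z - (lam / 2 : ℂ) * (σ + z) / (σ - z))) :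
    ∀ z ∈ Metric.ball (0 : ℂ) 1,
      ‖G z‖ ≤
        4 * (Real.sqrt 2 * ‖G 0‖ + (Real.sqrt 2 + 1) * |lam| / 2) *
          (‖σ - z‖) ^ 2 / (1 - (‖z‖) ^ 2) := by
  intro z hz
  have hzlt : ‖z‖ < 1 := by simpa [Metric.mem_ball, dist_zero_right] using hz
  have hZ0 : (0:ℝ) ≤ ‖z‖ := norm_nonneg z
  have hz2 : (0:ℝ) < 1 - (‖z‖) ^ 2 := by nlinarith
  have h0 : (0 : ℂ) ∈ Metric.ball (0 : ℂ) 1 := by simp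
  have hσ0 : σ ≠ 0 := by
    intro h; rw [h] at hσ; simp at hσ
  have hσz : σ - z ≠ 0 := by
    intro h
    have h' : σ = z := sub_eq_zero.mp h
    rw [← h', hσ] at hzlt
    linarith
  have hns : σ * conj σ = 1 := by
    rw [Complex.mul_conj]
    norm_cast
    rw [← Complex.sq_norm, hσ]; norm_num
  have hcs : conj σ * σ = 1 := by rw [mul_comm]; exact hns
  -- abs (conj σ * z - 1) = abs (σ - z)
  have habs1 : ‖conj σ * z - 1‖ = ‖σ - z‖ := by
    have : conj σ * z - 1 = conj σ * (z - σ) := by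
      rw [mul_sub, hcs]
    rw [this, norm_mul, Complex.norm_conj, hσ, one_mul, norm_sub_rev z σ]
  -- value at 0
  have hG0 : ‖G 0‖ = ‖p 0 - (lam / 2 : ℂ)‖ := by
    have h := hG 0 h0
    have hσσ : σ / σ = 1 := div_self hσ0
    have : G 0 = σ * (p 0 - (lam / 2 : ℂ)) := by
      rw [h]
      field_simp
      ring
    rw [this, norm_mul, hσ, one_mul]
  have hlam : ‖(lam / 2 : ℂ)‖ = |lam| / 2 := by
    rw [show ((lam : ℂ) / 2) = ((lam / 2 : ℝ) : ℂ) by push_cast; ring,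
      Complex.norm_real, Real.norm_eq_abs, abs_div]
    norm_num
  have hP0 : ‖p 0‖ ≤ ‖G 0‖ + |lam| / 2 := by
    rw [hG0]
    calc ‖p 0‖ = ‖(p 0 - (lam / 2 : ℂ)) + (lam / 2 : ℂ)‖ := by
          ring_nf
      _ ≤ ‖p 0 - (lam / 2 : ℂ)‖ + ‖(lam / 2 : ℂ)‖ :=
          norm_add_le _ _
      _ = ‖p 0 - (lam / 2 : ℂ)‖ + |lam| / 2 := by rw [hlam]
  -- rewrite G z
  have hGz : G z = (z - σ) * (conj σ * z - 1) * p z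
      + (lam / 2 : ℂ) * (σ + z) * (conj σ * z - 1) := by
    rw [hG z hz]
    field_simp
    ring
  set A : ℝ := ‖σ - z‖ with hA
  set Z : ℝ := ‖z‖ with hZ
  set Pz : ℝ := ‖p z‖ with hPz
  set P0 : ℝ := ‖p 0‖ with hP0'
  set L : ℝ := |lam| with hL
  have hA0 : 0 ≤ A := norm_nonneg _
  have hPz0 : 0 ≤ Pz := norm_nonneg _
  have hP00 : 0 ≤ P0 := norm_nonneg _
  have hL0 : 0 ≤ L := abs_nonneg _
  have hG00 : 0 ≤ ‖G 0‖ := norm_nonneg _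
  have hA1 : 1 - Z ≤ A := by
    have h := abs_norm_sub_norm_le σ z
    simp only [Real.norm_eq_abs, hσ] at h
    calc 1 - Z ≤ |1 - Z| := le_abs_self _
      _ ≤ A := h
  have hσplus : ‖σ + z‖ ≤ 2 := by
    calc ‖σ + z‖ ≤ ‖σ‖ + ‖z‖ := norm_add_le _ _
      _ ≤ 2 := by rw [hσ]; linarith
  have hGle : ‖G z‖ ≤ A ^ 2 * Pz + L * A := by
    rw [hGz]
    calc ‖(z - σ) * (conj σ * z - 1) * p z
          + (lam / 2 : ℂ) * (σ + z) * (conj σ * z - 1)‖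
        ≤ ‖(z - σ) * (conj σ * z - 1) * p z‖
          + ‖(lam / 2 : ℂ) * (σ + z) * (conj σ * z - 1)‖ :=
          norm_add_le _ _
      _ = A * A * Pz + (L / 2) * ‖σ + z‖ * A := by
          rw [norm_mul, norm_mul, norm_mul, norm_mul, habs1, hlam, norm_sub_rev z σ]
      _ ≤ A ^ 2 * Pz + L * A := by
          nlinarith [mul_nonneg (mul_nonneg hL0 hA0) (sub_nonneg.mpr hσplus)]
  have hbound := halfplane_bound p hp hre z hz
  have hz1 : (0:ℝ) < 1 - Z := by rw [hZ]; linarith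
  rw [← hPz, ← hP0', ← hZ] at hbound
  have hPzb : Pz * (1 - Z) ≤ P0 * (1 + Z) := (le_div_iff₀ hz1).mp hbound
  have hsq2 : (1:ℝ) ≤ Real.sqrt 2 := by
    rw [show (1:ℝ) = Real.sqrt 1 by simp]
    exact Real.sqrt_le_sqrt (by norm_num)
  clear_value A Z Pz P0 L
  clear hG hp hre hGz hG0 hbound hns hcs habs1 hσplus hA hZ hPz hP0' hL hlam hσ0 hσz h0 hz hσ
  rw [le_div_iff₀ hz2]
  calc ‖G z‖ * (1 - Z ^ 2)
      ≤ (A ^ 2 * Pz + L * A) * (1 - Z ^ 2) := mul_le_mul_of_nonneg_right hGle hz2.le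
    _ = A ^ 2 * (Pz * (1 - Z)) * (1 + Z) + L * A * (1 - Z) * (1 + Z) := by ring
    _ ≤ A ^ 2 * (P0 * (1 + Z)) * (1 + Z) + L * A * A * (1 + Z) := by
        have t1 := mul_le_mul_of_nonneg_right
          (mul_le_mul_of_nonneg_left hPzb (sq_nonneg A)) (show (0:ℝ) ≤ 1 + Z by linarith)
        have t2 := mul_le_mul_of_nonneg_right
          (mul_le_mul_of_nonneg_left hA1 (mul_nonneg hL0 hA0)) (show (0:ℝ) ≤ 1 + Z by linarith)
        nlinarith [t1, t2]
    _ ≤ A ^ 2 * (P0 * 2) * 2 + L * A * A * 2 := by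
        nlinarith [mul_nonneg (mul_nonneg (sq_nonneg A) hP00)
            (show (0:ℝ) ≤ 4 - (1 + Z) ^ 2 by nlinarith),
          mul_nonneg (mul_nonneg hL0 (sq_nonneg A)) (show (0:ℝ) ≤ 2 - (1 + Z) by linarith)]
    _ = A ^ 2 * (4 * P0 + 2 * L) := by ring
    _ ≤ A ^ 2 * (4 * (‖G 0‖ + L / 2) + 2 * L) := by
        nlinarith [sq_nonneg A, mul_le_mul_of_nonneg_left hP0 (sq_nonneg A)]
    _ ≤ 4 * (Real.sqrt 2 * ‖G 0‖ + (Real.sqrt 2 + 1) * L / 2) * A ^ 2 := by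
        nlinarith [mul_nonneg (mul_nonneg (sq_nonneg A) hG00) (sub_nonneg.mpr hsq2),
          mul_nonneg (mul_nonneg (sq_nonneg A) hL0) (sub_nonneg.mpr hsq2)]
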